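/- Let p be a prime and let F_p be the field with p elements. Then the quotient algebra F_p[t_1,…,t_p] / ( t_1·t_i − (i+1)·t_{i+1} for 1 ≤ i ≤ p−1, t_1·t_p ) is isomorphic as an F_p-algebra to F_p[u,v]/(u^p, u·v), via an isomorphism sending the class of t_1 to the class of u and the class of t_p to the class of v. In particular this quotient is infinite-dimensional over F_p. -/

import Mathlib

open MvPolynomial

namespace UnknotAux

noncomputable section

def Iid (p : ℕ) (hp : p.Prime) : Ideal (MvPolynomial (Fin p) (ZMod p)) :=
  Ideal.span (Set.range (fun i : Fin (p - 1) =>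
      (X (⟨0, hp.pos⟩ : Fin p) *
          X (⟨(i : ℕ), lt_of_lt_of_le i.isLt (Nat.sub_le p 1)⟩ : Fin p) -
        ((i : ℕ) + 2) •
          X (⟨(i : ℕ) + 1, by have := i.isLt; have := hp.pos; omega⟩ : Fin p) :
        MvPolynomial (Fin p) (ZMod p))) ∪
    {X (⟨0, hp.pos⟩ : Fin p) * X (⟨p - 1, Nat.sub_lt hp.pos one_pos⟩ : Fin p)})

def Jid (p : ℕ) : Ideal (MvPolynomial (Fin 2) (ZMod p)) :=
  Ideal.span {(X 0 ^ p : MvPolynomial (Fin 2) (ZMod p)), X 0 * X 1}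

lemma fact_ne_zero (p : ℕ) (hp : p.Prime) (k : ℕ) (hk : k < p) :
    ((k.factorial : ℕ) : ZMod p) ≠ 0 := by
  haveI : NeZero p := ⟨by have := hp.two_le; omega⟩
  rw [Ne, ZMod.natCast_eq_zero_iff]
  intro h
  have := (Nat.Prime.dvd_factorial hp).mp h
  omega

lemma mul_gen (p : ℕ) (hp : p.Prime) (k : ℕ) (hk : k < p - 1) :
    Ideal.Quotient.mk (Iid p hp) (X (⟨0, hp.pos⟩ : Fin p) * X ⟨k, by omega⟩) =
      ((k + 2 : ℕ) : ZMod p) • Ideal.Quotient.mk (Iid p hp) (X ⟨k + 1, by omega⟩) := by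
  have hmem : (X (⟨0, hp.pos⟩ : Fin p) * X ⟨k, by omega⟩ -
      (k + 2) • X ⟨k + 1, by omega⟩ : MvPolynomial (Fin p) (ZMod p)) ∈ Iid p hp := by
    apply Ideal.subset_span
    left
    exact ⟨⟨k, hk⟩, rfl⟩
  have h := (Ideal.Quotient.eq_zero_iff_mem).mpr hmem
  rw [map_sub, sub_eq_zero] at h
  rw [h, map_nsmul, Nat.cast_smul_eq_nsmul]

lemma pow_eq (p : ℕ) (hp : p.Prime) (k : ℕ) (hk : k < p) :
    (Ideal.Quotient.mk (Iid p hp) (X (⟨0, hp.pos⟩ : Fin p))) ^ (k + 1) =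
      (((k + 1).factorial : ℕ) : ZMod p) • Ideal.Quotient.mk (Iid p hp) (X ⟨k, hk⟩) := by
  induction k with
  | zero => simp [Nat.factorial]
  | succ k ih =>
    rw [pow_succ, ih (by omega), smul_mul_assoc, ← map_mul, mul_comm, mul_gen p hp k (by omega),
      smul_smul]
    congr 1
    rw [Nat.factorial_succ (k + 1)]
    push_cast
    ring

lemma pow_p (p : ℕ) (hp : p.Prime) :
    (Ideal.Quotient.mk (Iid p hp) (X (⟨0, hp.pos⟩ : Fin p))) ^ p = 0 := by
  have h2 : 2 ≤ p := hp.two_le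
  have hs : (Ideal.Quotient.mk (Iid p hp) (X (⟨0, hp.pos⟩ : Fin p))) ^ p =
      (Ideal.Quotient.mk (Iid p hp) (X (⟨0, hp.pos⟩ : Fin p))) ^ (p - 2 + 1) *
        Ideal.Quotient.mk (Iid p hp) (X (⟨0, hp.pos⟩ : Fin p)) := by
    rw [← pow_succ]
    congr 1
    omega
  rw [hs, pow_eq p hp (p - 2) (by omega), smul_mul_assoc, ← map_mul, mul_comm,
    mul_gen p hp (p - 2) (by omega), show p - 2 + 2 = p by omega, ZMod.natCast_self, zero_smul,
    smul_zero]

lemma mul_last (p : ℕ) (hp : p.Prime) : Ideal.Quotient.mk (Iid p hp)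
    (X (⟨0, hp.pos⟩ : Fin p) * X (⟨p - 1, Nat.sub_lt hp.pos one_pos⟩ : Fin p)) = 0 := by
  rw [Ideal.Quotient.eq_zero_iff_mem]
  exact Ideal.subset_span (Or.inr rfl)

lemma Jpow (p : ℕ) :
    (Ideal.Quotient.mk (Jid p) (X 0 : MvPolynomial (Fin 2) (ZMod p))) ^ p = 0 := by
  rw [← map_pow, Ideal.Quotient.eq_zero_iff_mem]
  exact Ideal.subset_span (Set.mem_insert _ _)

lemma Jmul (p : ℕ) :
    Ideal.Quotient.mk (Jid p) ((X 0 : MvPolynomial (Fin 2) (ZMod p)) * X 1) = 0 := by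
  rw [Ideal.Quotient.eq_zero_iff_mem]
  exact Ideal.subset_span (Set.mem_insert_of_mem _ rfl)

def tgt (p : ℕ) : Fin p → (MvPolynomial (Fin 2) (ZMod p) ⧸ Jid p) := fun j =>
  if (j : ℕ) = p - 1 then Ideal.Quotient.mk (Jid p) (X 1)
  else ((((j : ℕ) + 1).factorial : ZMod p))⁻¹ •
    (Ideal.Quotient.mk (Jid p) (X 0)) ^ ((j : ℕ) + 1)

lemma tgt_lt (p : ℕ) (j : Fin p) (hj : (j : ℕ) < p - 1) :
    tgt p j = ((((j : ℕ) + 1).factorial : ZMod p))⁻¹ •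
      (Ideal.Quotient.mk (Jid p) (X 0)) ^ ((j : ℕ) + 1) := by
  simp only [tgt]
  rw [if_neg (by omega)]

lemma tgt_eq (p : ℕ) (j : Fin p) (hj : (j : ℕ) = p - 1) :
    tgt p j = Ideal.Quotient.mk (Jid p) (X 1) := by
  simp only [tgt]
  rw [if_pos hj]

lemma tgt_zero (p : ℕ) (hp : p.Prime) :
    tgt p (⟨0, hp.pos⟩ : Fin p) = Ideal.Quotient.mk (Jid p) (X 0) := by
  have h2 : 2 ≤ p := hp.two_le
  rw [tgt_lt p ⟨0, hp.pos⟩ (by simp; omega)]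
  simp [Nat.factorial]

def F (p : ℕ) : MvPolynomial (Fin p) (ZMod p) →ₐ[ZMod p]
    (MvPolynomial (Fin 2) (ZMod p) ⧸ Jid p) :=
  aeval (tgt p)

lemma F_ker (p : ℕ) (hp : p.Prime) : ∀ a ∈ Iid p hp, F p a = 0 := by
  haveI : Fact p.Prime := ⟨hp⟩
  have h2 : 2 ≤ p := hp.two_le
  have hspan : Iid p hp ≤ RingHom.ker (F p).toRingHom := by
    rw [Iid, Ideal.span_le]
    rintro a (⟨i, rfl⟩ | rfl)
    · have hi : (i : ℕ) < p - 1 := i.isLt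
      rw [SetLike.mem_coe, RingHom.mem_ker]
      show F p _ = 0
      simp only [F, map_sub, map_mul, map_nsmul, aeval_X]
      rw [tgt_zero p hp]
      rw [tgt_lt p ⟨(i : ℕ), lt_of_lt_of_le i.isLt (Nat.sub_le p 1)⟩ (by simpa using hi)]
      have hip1 : (i : ℕ) + 1 < p := by omega
      by_cases hc : (i : ℕ) + 1 = p - 1
      · rw [tgt_eq p ⟨(i : ℕ) + 1, hip1⟩ (by simpa using hc)]
        rw [← Nat.cast_smul_eq_nsmul (ZMod p),
          show (((i : ℕ) + 2 : ℕ) : ZMod p) = ((p : ℕ) : ZMod p) by rw [show (i : ℕ) + 2 = p by omega],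
          ZMod.natCast_self, zero_smul, sub_zero, mul_smul_comm, ← pow_succ']
        have hip : (i : ℕ) + 1 + 1 = p := by omega
        rw [show ((⟨(i : ℕ), lt_of_lt_of_le i.isLt (Nat.sub_le p 1)⟩ : Fin p) : ℕ) = (i : ℕ)
            from rfl, hip, Jpow, smul_zero]
      · have hlt : (i : ℕ) + 1 < p - 1 := by omega
        rw [tgt_lt p ⟨(i : ℕ) + 1, hip1⟩ (by simpa using hlt)]
        rw [← Nat.cast_smul_eq_nsmul (ZMod p), mul_smul_comm, ← pow_succ', smul_smul]
        rw [sub_eq_zero]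
        simp only [show ((⟨(i : ℕ), lt_of_lt_of_le i.isLt (Nat.sub_le p 1)⟩ : Fin p) : ℕ) = (i : ℕ)
            from rfl, show ((⟨(i : ℕ) + 1, hip1⟩ : Fin p) : ℕ) = (i : ℕ) + 1 from rfl]
        congr 1
        have hfe : ((((i : ℕ) + 1 + 1).factorial : ℕ) : ZMod p) =
            (((i : ℕ) + 2 : ℕ) : ZMod p) * ((((i : ℕ) + 1).factorial : ℕ) : ZMod p) := by
          rw [Nat.factorial_succ]
          push_cast
          ring
        have hf2 : ((((i : ℕ) + 1 + 1).factorial : ℕ) : ZMod p) ≠ 0 :=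
          fact_ne_zero p hp _ (by omega)
        have hc2 : (((i : ℕ) + 2 : ℕ) : ZMod p) ≠ 0 :=
          left_ne_zero_of_mul (hfe ▸ hf2)
        rw [show (i : ℕ) + 1 + 1 = (i : ℕ) + 2 from rfl] at hfe ⊢
        rw [hfe, mul_inv, ← mul_assoc, mul_inv_cancel₀ hc2, one_mul]
    · rw [SetLike.mem_coe, RingHom.mem_ker]
      show F p _ = 0
      simp only [F, map_mul, aeval_X]
      rw [tgt_zero p hp, tgt_eq p _ rfl, ← map_mul, Jmul]
  intro a ha
  exact hspan ha

def G (p : ℕ) (hp : p.Prime) : MvPolynomial (Fin 2) (ZMod p) →ₐ[ZMod p]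
    (MvPolynomial (Fin p) (ZMod p) ⧸ Iid p hp) :=
  aeval ![Ideal.Quotient.mk (Iid p hp) (X (⟨0, hp.pos⟩ : Fin p)),
    Ideal.Quotient.mk (Iid p hp) (X (⟨p - 1, Nat.sub_lt hp.pos one_pos⟩ : Fin p))]

lemma G_ker (p : ℕ) (hp : p.Prime) : ∀ a ∈ Jid p, G p hp a = 0 := by
  have hspan : Jid p ≤ RingHom.ker (G p hp).toRingHom := by
    rw [Jid, Ideal.span_le]
    rintro a (rfl | rfl)
    · rw [SetLike.mem_coe, RingHom.mem_ker]
      show G p hp _ = 0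
      simp only [G, map_pow, aeval_X, Matrix.cons_val_zero]
      exact pow_p p hp
    · rw [SetLike.mem_coe, RingHom.mem_ker]
      show G p hp _ = 0
      simp only [G, map_mul, aeval_X, Matrix.cons_val_zero, Matrix.cons_val_one, Matrix.head_cons]
      rw [← map_mul]
      exact mul_last p hp
  intro a ha
  exact hspan ha

def F' (p : ℕ) (hp : p.Prime) : (MvPolynomial (Fin p) (ZMod p) ⧸ Iid p hp) →ₐ[ZMod p]
    (MvPolynomial (Fin 2) (ZMod p) ⧸ Jid p) :=
  Ideal.Quotient.liftₐ (Iid p hp) (F p) (F_ker p hp)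

def G' (p : ℕ) (hp : p.Prime) : (MvPolynomial (Fin 2) (ZMod p) ⧸ Jid p) →ₐ[ZMod p]
    (MvPolynomial (Fin p) (ZMod p) ⧸ Iid p hp) :=
  Ideal.Quotient.liftₐ (Jid p) (G p hp) (G_ker p hp)

lemma F'_mk (p : ℕ) (hp : p.Prime) (a : MvPolynomial (Fin p) (ZMod p)) :
    F' p hp (Ideal.Quotient.mk (Iid p hp) a) = F p a := by
  simp [F', Ideal.Quotient.liftₐ_apply, Ideal.Quotient.lift_mk]
  exact Ideal.Quotient.lift_mk _ _ _

lemma G'_mk (p : ℕ) (hp : p.Prime) (a : MvPolynomial (Fin 2) (ZMod p)) :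
    G' p hp (Ideal.Quotient.mk (Jid p) a) = G p hp a := by
  simp [G', Ideal.Quotient.liftₐ_apply, Ideal.Quotient.lift_mk]
  exact Ideal.Quotient.lift_mk _ _ _

lemma FG (p : ℕ) (hp : p.Prime) :
    (F' p hp).comp (G' p hp) = AlgHom.id (ZMod p) _ := by
  apply Ideal.Quotient.algHom_ext
  apply MvPolynomial.algHom_ext
  intro i
  fin_cases i
  · simp only [AlgHom.comp_apply, Ideal.Quotient.mkₐ_eq_mk, AlgHom.id_apply, G'_mk, G, aeval_X,
      Fin.mk_zero, Fin.mk_one, Matrix.cons_val_zero, Matrix.cons_val_one, Matrix.head_cons,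
      F'_mk, F]
    exact tgt_zero p hp
  · simp only [AlgHom.comp_apply, Ideal.Quotient.mkₐ_eq_mk, AlgHom.id_apply, G'_mk, G, aeval_X,
      Fin.mk_zero, Fin.mk_one, Matrix.cons_val_zero, Matrix.cons_val_one, Matrix.head_cons,
      F'_mk, F]
    exact tgt_eq p _ rfl

lemma GF (p : ℕ) (hp : p.Prime) :
    (G' p hp).comp (F' p hp) = AlgHom.id (ZMod p) _ := by
  haveI : Fact p.Prime := ⟨hp⟩
  have h2 : 2 ≤ p := hp.two_le
  apply Ideal.Quotient.algHom_ext
  apply MvPolynomial.algHom_ext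
  intro j
  simp only [AlgHom.comp_apply, Ideal.Quotient.mkₐ_eq_mk, AlgHom.id_apply]
  rw [F'_mk]
  simp only [F, aeval_X]
  by_cases hj : (j : ℕ) = p - 1
  · rw [tgt_eq p j hj, G'_mk]
    simp only [G, aeval_X, Matrix.cons_val_one, Matrix.head_cons, Matrix.cons_val_zero]
    rw [show (⟨p - 1, Nat.sub_lt hp.pos one_pos⟩ : Fin p) = j from (Fin.ext hj).symm]
  · have hlt : (j : ℕ) < p - 1 := by have := j.isLt; omega
    rw [tgt_lt p j hlt, map_smul, map_pow, G'_mk]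
    simp only [G, aeval_X, Matrix.cons_val_zero]
    rw [pow_eq p hp (j : ℕ) j.isLt, smul_smul,
      inv_mul_cancel₀ (fact_ne_zero p hp ((j : ℕ) + 1) (by omega)), one_smul, Fin.eta]

def e (p : ℕ) (hp : p.Prime) : (MvPolynomial (Fin p) (ZMod p) ⧸ Iid p hp) ≃ₐ[ZMod p]
    (MvPolynomial (Fin 2) (ZMod p) ⧸ Jid p) :=
  AlgEquiv.ofAlgHom (F' p hp) (G' p hp) (FG p hp) (GF p hp)

lemma e_apply (p : ℕ) (hp : p.Prime) (x : MvPolynomial (Fin p) (ZMod p) ⧸ Iid p hp) :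
    e p hp x = F' p hp x := rfl

lemma e_zero (p : ℕ) (hp : p.Prime) :
    e p hp (Ideal.Quotient.mk (Iid p hp) (X (⟨0, hp.pos⟩ : Fin p))) =
      Ideal.Quotient.mk (Jid p) (X (0 : Fin 2)) := by
  rw [e_apply, F'_mk]
  simp only [F, aeval_X]
  exact tgt_zero p hp

lemma e_last (p : ℕ) (hp : p.Prime) :
    e p hp (Ideal.Quotient.mk (Iid p hp) (X (⟨p - 1, Nat.sub_lt hp.pos one_pos⟩ : Fin p))) =
      Ideal.Quotient.mk (Jid p) (X (1 : Fin 2)) := by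
  rw [e_apply, F'_mk]
  simp only [F, aeval_X]
  exact tgt_eq p _ rfl

def φ (p : ℕ) : MvPolynomial (Fin 2) (ZMod p) →ₐ[ZMod p] Polynomial (ZMod p) :=
  aeval ![0, Polynomial.X]

lemma φ_ker (p : ℕ) (hp : p.Prime) : ∀ a ∈ Jid p, φ p a = 0 := by
  have hspan : Jid p ≤ RingHom.ker (φ p).toRingHom := by
    rw [Jid, Ideal.span_le]
    rintro a (rfl | rfl)
    · rw [SetLike.mem_coe, RingHom.mem_ker]
      show φ p _ = 0
      simp only [φ, map_pow, aeval_X, Matrix.cons_val_zero]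
      exact zero_pow (by have := hp.two_le; omega)
    · rw [SetLike.mem_coe, RingHom.mem_ker]
      show φ p _ = 0
      simp [φ]
  intro a ha
  exact hspan ha

def ψ (p : ℕ) (hp : p.Prime) :
    (MvPolynomial (Fin 2) (ZMod p) ⧸ Jid p) →ₐ[ZMod p] Polynomial (ZMod p) :=
  Ideal.Quotient.liftₐ (Jid p) (φ p) (φ_ker p hp)

lemma ψ_surj (p : ℕ) (hp : p.Prime) : Function.Surjective (ψ p hp) := by
  rw [← AlgHom.range_eq_top]
  rw [← top_le_iff, ← Polynomial.adjoin_X]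
  apply Algebra.adjoin_le
  rintro x rfl
  exact ⟨Ideal.Quotient.mk (Jid p) (X 1), by
    show φ p (X 1) = Polynomial.X
    simp [φ]⟩

lemma not_finite (p : ℕ) (hp : p.Prime) :
    ¬ Module.Finite (ZMod p) (MvPolynomial (Fin p) (ZMod p) ⧸ Iid p hp) := by
  intro hfin
  haveI : Fact p.Prime := ⟨hp⟩
  haveI := hfin
  haveI : Module.Finite (ZMod p) (MvPolynomial (Fin 2) (ZMod p) ⧸ Jid p) :=
    Module.Finite.equiv (e p hp).toLinearEquiv
  exact Polynomial.not_finite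
    (Module.Finite.of_surjective (ψ p hp).toLinearMap (ψ_surj p hp))

end
end UnknotAux

/-- Let `p` be a prime. Then
`F_p[t_1,…,t_p]/(t₁t_i - (i+1)t_{i+1} (1 ≤ i ≤ p-1), t₁t_p)` is isomorphic as an
`F_p`-algebra to `F_p[u,v]/(u^p, uv)`, sending the class of `t₁` to the class of `u` and the
class of `t_p` to the class of `v`; in particular this quotient is infinite-dimensional over
`F_p`.  (Here `t_j` is the variable `X ⟨j-1⟩`.) -/
theorem unknot_quotient_char_p (p : ℕ) (hp : p.Prime) :
    (∃ e : (MvPolynomial (Fin p) (ZMod p) ⧸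
              Ideal.span (Set.range (fun i : Fin (p - 1) =>
                  (X (⟨0, hp.pos⟩ : Fin p) *
                      X (⟨(i : ℕ), lt_of_lt_of_le i.isLt (Nat.sub_le p 1)⟩ : Fin p) -
                    ((i : ℕ) + 2) •
                      X (⟨(i : ℕ) + 1, by have := i.isLt; omega⟩ : Fin p) :
                    MvPolynomial (Fin p) (ZMod p))) ∪
                {X (⟨0, hp.pos⟩ : Fin p) * X (⟨p - 1, Nat.sub_lt hp.pos one_pos⟩ : Fin p)}))
          ≃ₐ[ZMod p]
          (MvPolynomial (Fin 2) (ZMod p) ⧸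
            Ideal.span {(X 0 ^ p : MvPolynomial (Fin 2) (ZMod p)), X 0 * X 1}),
        e (Ideal.Quotient.mk _ (X (⟨0, hp.pos⟩ : Fin p))) =
            Ideal.Quotient.mk _ (X (0 : Fin 2)) ∧
        e (Ideal.Quotient.mk _ (X (⟨p - 1, Nat.sub_lt hp.pos one_pos⟩ : Fin p))) =
            Ideal.Quotient.mk _ (X (1 : Fin 2))) ∧
    ¬ Module.Finite (ZMod p)
        (MvPolynomial (Fin p) (ZMod p) ⧸
          Ideal.span (Set.range (fun i : Fin (p - 1) =>
              (X (⟨0, hp.pos⟩ : Fin p) *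
                  X (⟨(i : ℕ), lt_of_lt_of_le i.isLt (Nat.sub_le p 1)⟩ : Fin p) -
                ((i : ℕ) + 2) •
                  X (⟨(i : ℕ) + 1, by have := i.isLt; omega⟩ : Fin p) :
                MvPolynomial (Fin p) (ZMod p))) ∪
            {X (⟨0, hp.pos⟩ : Fin p) * X (⟨p - 1, Nat.sub_lt hp.pos one_pos⟩ : Fin p)})) := by
  exact ⟨⟨UnknotAux.e p hp, UnknotAux.e_zero p hp, UnknotAux.e_last p hp⟩,
    UnknotAux.not_finite p hp⟩
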